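/- For networked housing markets on a chain with n ≥ 3 agents, there is no mechanism (a map from reported profiles to allocations) that is simultaneously individually rational, strategy-proof, and Pareto efficient, where agents report both a preference over houses and a subset of their true children, without restricting the preference domain. Concretely: in the chain market o→1→2→3 with preferences h_3 ≻_1 h_2 ≻_1 h_1, h_1 ≻_2 h_2 ≻_2 h_3, h_1 ≻_3 h_3 ≻_3 h_2, any mechanism that outputs an individually rational and Pareto efficient allocation on every (sub)market reachable by children-misreports admits a profitable deviation for some agent, hence is not strategy-proof. -/

import Mathlib

/-- A reported preference is a ranking: `σ k` is the `k`-th most preferred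
house.  `PrefLt σ a b` means house `a` is strictly preferred to house `b`. -/
def PrefLt (σ : Equiv.Perm (Fin 3)) (a b : Fin 3) : Prop := σ.symm a < σ.symm b

/-- A report profile on the chain o → 1 → 2 → 3: each agent reports a strict
preference over the three houses and whether they invite their child
(agent 3 has no child; its Bool is irrelevant). -/
structure NHMRep where
  pref : Fin 3 → Equiv.Perm (Fin 3)
  inv : Fin 3 → Bool

/-- Agent `i` is present iff every agent strictly before it on the chain
invites its child. -/
def NHMPresent (R : NHMRep) (i : Fin 3) : Prop := ∀ j : Fin 3, j < i → R.inv j = true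

/-- A mechanism allocates the present agents' houses bijectively among the
present agents and leaves absent agents with their own houses. -/
def NHMFeasible (M : NHMRep → Fin 3 → Fin 3) : Prop :=
  ∀ R, Set.BijOn (M R) {i | NHMPresent R i} {i | NHMPresent R i} ∧
    ∀ i, ¬ NHMPresent R i → M R i = i

/-- Individual rationality at every report profile. -/
def NHMIR (M : NHMRep → Fin 3 → Fin 3) : Prop :=
  ∀ R i, NHMPresent R i → (M R i = i ∨ PrefLt (R.pref i) (M R i) i)

/-- Pareto efficiency at every report profile. -/
def NHMPE (M : NHMRep → Fin 3 → Fin 3) : Prop :=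
  ∀ R, ¬ ∃ y : Fin 3 → Fin 3,
    Set.BijOn y {i | NHMPresent R i} {i | NHMPresent R i} ∧
    (∀ i, NHMPresent R i → (y i = M R i ∨ PrefLt (R.pref i) (y i) (M R i))) ∧
    (∃ j, NHMPresent R j ∧ PrefLt (R.pref j) (y j) (M R j))

/-- Strategy-proofness at the true profile `θ`: no agent can obtain a house
strictly preferred (by its true preference) to its truthful outcome by
unilaterally misreporting its preference and/or dropping its child. -/
def NHMSP (M : NHMRep → Fin 3 → Fin 3) (θ : NHMRep) : Prop :=
  ∀ (i : Fin 3) (p : Equiv.Perm (Fin 3)) (b : Bool),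
    ¬ PrefLt (θ.pref i)
        (M ⟨Function.update θ.pref i p, Function.update θ.inv i b⟩ i)
        (M θ i)

/-- The true profile: all agents invite, with preferences
h₃ ≻₁ h₂ ≻₁ h₁, h₁ ≻₂ h₂ ≻₂ h₃, h₁ ≻₃ h₃ ≻₃ h₂. -/
def θtrue : NHMRep :=
  ⟨![Equiv.swap 0 2, 1, Equiv.swap 1 2], fun _ => true⟩

instance (σ : Equiv.Perm (Fin 3)) (a b : Fin 3) : Decidable (PrefLt σ a b) :=
  inferInstanceAs (Decidable (σ.symm a < σ.symm b))

instance (R : NHMRep) (i : Fin 3) : Decidable (NHMPresent R i) :=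
  inferInstanceAs (Decidable (∀ j : Fin 3, j < i → R.inv j = true))

/-- Agent 0's deviating preference ranking: h₂ ≻ h₀ ≻ h₁. -/
def devPerm : Equiv.Perm (Fin 3) := Equiv.swap 0 1 * Equiv.swap 0 2

/-- The report profile where agent 0 misreports `devPerm`. -/
def R0dev : NHMRep :=
  ⟨Function.update θtrue.pref 0 devPerm, Function.update θtrue.inv 0 true⟩

/-- The report profile where agent 1 drops its child. -/
def R1dev : NHMRep :=
  ⟨Function.update θtrue.pref 1 (θtrue.pref 1), Function.update θtrue.inv 1 false⟩

/-- impossibility — no mechanism on the 3-agent chain networked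
housing market is simultaneously feasible, individually rational, Pareto
efficient (at every reachable report profile) and strategy-proof at the true
profile above. -/
theorem no_IR_SP_PE_mechanism_on_chain :
    ¬ ∃ M : NHMRep → Fin 3 → Fin 3, NHMFeasible M ∧ NHMIR M ∧ NHMPE M ∧ NHMSP M θtrue := by
  rintro ⟨M, hF, hIR, hPE, hSP⟩
  have fin3 : ∀ a : Fin 3, a = 0 ∨ a = 1 ∨ a = 2 := by decide
  -- the true profile: everyone is present
  have hPθ : ∀ i : Fin 3, NHMPresent θtrue i := by decide
  have hSθ : {i : Fin 3 | NHMPresent θtrue i} = Set.univ := Set.eq_univ_iff_forall.mpr hPθ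
  have hBθ := (hF θtrue).1
  rw [hSθ] at hBθ
  have hinjθ : Function.Injective (M θtrue) := Set.injOn_univ.mp hBθ.injOn
  have hIR1 : M θtrue 1 = 0 ∨ M θtrue 1 = 1 := by
    rcases hIR θtrue 1 (hPθ 1) with h | h
    · exact Or.inr h
    · exact Or.inl ((by decide : ∀ a : Fin 3, PrefLt (θtrue.pref 1) a 1 → a = 0) _ h)
  have hIR2 : M θtrue 2 = 0 ∨ M θtrue 2 = 2 := by
    rcases hIR θtrue 2 (hPθ 2) with h | h
    · exact Or.inr h
    · exact Or.inl ((by decide : ∀ a : Fin 3, PrefLt (θtrue.pref 2) a 2 → a = 0) _ h)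
  -- the identity is not PE at the true profile
  have notId : ¬ (M θtrue 0 = 0 ∧ M θtrue 1 = 1 ∧ M θtrue 2 = 2) := by
    rintro ⟨e0, e1, e2⟩
    apply hPE θtrue
    refine ⟨![1, 0, 2], ?_, ?_, ⟨0, hPθ 0, ?_⟩⟩
    · rw [hSθ]
      exact Function.Bijective.bijOn_univ (by decide)
    · intro i _
      rcases fin3 i with h | h | h <;> subst h
      · right; rw [e0]; decide
      · right; rw [e1]; decide
      · left; rw [e2]; decide
    · rw [e0]; decide
  -- the truthful outcome is either (1,0,2) or (2,1,0)
  have hmain : (M θtrue 0 = 1 ∧ M θtrue 1 = 0 ∧ M θtrue 2 = 2)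
      ∨ (M θtrue 0 = 2 ∧ M θtrue 1 = 1 ∧ M θtrue 2 = 0) := by
    rcases hIR1 with h1 | h1 <;> rcases hIR2 with h2 | h2
    · exact absurd (hinjθ (h1.trans h2.symm)) (by decide)
    · refine Or.inl ⟨?_, h1, h2⟩
      rcases fin3 (M θtrue 0) with h0 | h0 | h0
      · exact absurd (hinjθ (h0.trans h1.symm)) (by decide)
      · exact h0
      · exact absurd (hinjθ (h0.trans h2.symm)) (by decide)
    · refine Or.inr ⟨?_, h1, h2⟩
      rcases fin3 (M θtrue 0) with h0 | h0 | h0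
      · exact absurd (hinjθ (h0.trans h2.symm)) (by decide)
      · exact absurd (hinjθ (h0.trans h1.symm)) (by decide)
      · exact h0
    · exfalso
      apply notId
      refine ⟨?_, h1, h2⟩
      rcases fin3 (M θtrue 0) with h0 | h0 | h0
      · exact h0
      · exact absurd (hinjθ (h0.trans h1.symm)) (by decide)
      · exact absurd (hinjθ (h0.trans h2.symm)) (by decide)
  rcases hmain with ⟨e0, e1, e2⟩ | ⟨e0, e1, e2⟩
  · -- case A: agent 0 deviates with `devPerm`
    have hP : ∀ i : Fin 3, NHMPresent R0dev i := by decide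
    have hS : {i : Fin 3 | NHMPresent R0dev i} = Set.univ := Set.eq_univ_iff_forall.mpr hP
    have hB := (hF R0dev).1
    rw [hS] at hB
    have hinj : Function.Injective (M R0dev) := Set.injOn_univ.mp hB.injOn
    have hIR0' : M R0dev 0 = 0 ∨ M R0dev 0 = 2 := by
      rcases hIR R0dev 0 (hP 0) with h | h
      · exact Or.inl h
      · exact Or.inr ((by decide : ∀ a : Fin 3, PrefLt (R0dev.pref 0) a 0 → a = 2) _ h)
    rcases hIR0' with h0 | h0
    · -- the mechanism would have to be the identity, contradicting PE
      have h1' : M R0dev 1 = 1 := by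
        rcases hIR R0dev 1 (hP 1) with h | h
        · exact h
        · have := (by decide : ∀ a : Fin 3, PrefLt (R0dev.pref 1) a 1 → a = 0) _ h
          exact absurd (hinj (this.trans h0.symm)) (by decide)
      have h2' : M R0dev 2 = 2 := by
        rcases hIR R0dev 2 (hP 2) with h | h
        · exact h
        · have := (by decide : ∀ a : Fin 3, PrefLt (R0dev.pref 2) a 2 → a = 0) _ h
          exact absurd (hinj (this.trans h0.symm)) (by decide)
      apply hPE R0dev
      refine ⟨![2, 1, 0], ?_, ?_, ⟨0, hP 0, ?_⟩⟩
      · rw [hS]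
        exact Function.Bijective.bijOn_univ (by decide)
      · intro i _
        rcases fin3 i with h | h | h <;> subst h
        · right; rw [h0]; decide
        · left; rw [h1']; decide
        · right; rw [h2']; decide
      · rw [h0]; decide
    · -- agent 0 gets house 2: SP violation
      have hs := hSP 0 devPerm true
      rw [e0] at hs
      apply hs
      have h0' : M (⟨Function.update θtrue.pref 0 devPerm,
          Function.update θtrue.inv 0 true⟩ : NHMRep) 0 = 2 := h0
      rw [h0']
      decide
  · -- case B: agent 1 drops its child
    have hmem : ∀ x : Fin 3, NHMPresent R1dev x ↔ (x = 0 ∨ x = 1) := by decide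
    have hB := (hF R1dev).1
    have h0m : (0 : Fin 3) ∈ {i : Fin 3 | NHMPresent R1dev i} := (hmem 0).2 (Or.inl rfl)
    have h1m : (1 : Fin 3) ∈ {i : Fin 3 | NHMPresent R1dev i} := (hmem 1).2 (Or.inr rfl)
    have hM1 : M R1dev 1 = 0 ∨ M R1dev 1 = 1 := (hmem _).1 (hB.mapsTo h1m)
    rcases hM1 with h1 | h1
    · -- agent 1 gets house 0: SP violation
      have hs := hSP 1 (θtrue.pref 1) false
      rw [e1] at hs
      apply hs
      have h1' : M (⟨Function.update θtrue.pref 1 (θtrue.pref 1),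
          Function.update θtrue.inv 1 false⟩ : NHMRep) 1 = 0 := h1
      rw [h1']
      decide
    · -- otherwise the sub-market allocation is the identity: PE violation
      have hM0 : M R1dev 0 = 0 := by
        rcases (hmem _).1 (hB.mapsTo h0m) with h | h
        · exact h
        · exact absurd (hB.injOn h0m h1m (h.trans h1.symm)) (by decide)
      apply hPE R1dev
      refine ⟨![1, 0, 2], ⟨?_, ?_, ?_⟩, ?_, ⟨0, h0m, ?_⟩⟩
      · intro x hx
        rcases (hmem x).1 hx with h | h <;> subst h
        · exact h1m
        · exact h0m
      · intro x hx x' hx' hxy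
        rcases (hmem x).1 hx with h | h <;> rcases (hmem x').1 hx' with h' | h' <;>
          subst h <;> subst h' <;> first | rfl | exact absurd hxy (by decide)
      · intro x hx
        rcases (hmem x).1 hx with h | h <;> subst h
        · exact ⟨1, h1m, by decide⟩
        · exact ⟨0, h0m, by decide⟩
      · intro i hi
        rcases (hmem i).1 hi with h | h <;> subst h
        · right; rw [hM0]; decide
        · right; rw [h1]; decide
      · rw [hM0]; decide
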